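/- Let x_t, t = 1,…,k+1, be generated by the OE method, and let x_{R+1} be the iterate with index R ∈ {1,…,k} minimizing ‖x_{t+1} − x_t‖² + ‖x_t − x_{t−1}‖² over t = 1,…,k. If Σ_{t=1}^k ‖x_{t+1} − x_t‖² ≤ δ, then res(x_{R+1}) ≤ 2(L + L_ω/γ_R + Lλ_R)·√(2δ)/√k. -/

import Mathlib

open scoped RealInnerProductSpace BigOperators
open Finset

open Topology Filter

-- variational inequality from first-order optimality on a convex set
lemma vi_aux {E : Type*} [NormedAddCommGroup E] [NormedSpace ℝ E]
    {X : Set E} (hX : Convex ℝ X) {φ : E → ℝ} {A : E →L[ℝ] ℝ} {x0 : E}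
    (hx : x0 ∈ X) (hmin : IsMinOn φ X x0) (hA : HasFDerivAt φ A x0) :
    ∀ z ∈ X, 0 ≤ A (z - x0) := by
  intro z hz
  set d := z - x0 with hd
  have hline : HasDerivAt (fun a : ℝ => x0 + a • d) d 0 := by
    simpa using ((hasDerivAt_id (0 : ℝ)).smul_const d).const_add x0
  have hA' : HasFDerivAt φ A ((fun a : ℝ => x0 + a • d) 0) := by simpa using hA
  have hcomp : HasDerivAt (fun a : ℝ => φ (x0 + a • d)) (A d) 0 := by
    exact hA'.comp_hasDerivAt (0 : ℝ) hline
  have hslope := hasDerivAt_iff_tendsto_slope.mp hcomp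
  have hmono : 𝓝[>] (0:ℝ) ≤ 𝓝[≠] (0:ℝ) :=
    nhdsWithin_mono _ (fun a ha => ne_of_gt ha)
  refine ge_of_tendsto (hslope.mono_left hmono) ?_
  filter_upwards [Ioc_mem_nhdsGT_of_mem (by norm_num : (0:ℝ) ∈ Set.Ico 0 1)] with a ha
  have hmem : x0 + a • d ∈ X := hX.add_smul_sub_mem hx hz ⟨le_of_lt ha.1, ha.2⟩
  have hge : φ x0 ≤ φ (x0 + a • d) := hmin hmem
  have hs : slope (fun a : ℝ => φ (x0 + a • d)) 0 a
      = (φ (x0 + a • d) - φ x0) / a := by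
    simp [slope_def_field]
  rw [hs]
  exact div_nonneg (by linarith) ha.1.le

/-- The residual of a point `xb`: `res(xb) = inf { ‖y - F xb‖ : y ∈ -N_X(xb) }`,
where `N_X(xb)` is the normal cone of `X` at `xb`. -/
noncomputable def vIResidual {n : ℕ} (X : Set (EuclideanSpace ℝ (Fin n)))
    (F : EuclideanSpace ℝ (Fin n) → EuclideanSpace ℝ (Fin n))
    (xb : EuclideanSpace ℝ (Fin n)) : ℝ :=
  sInf ((fun y => ‖y - F xb‖) ''
    {y : EuclideanSpace ℝ (Fin n) | ∀ z ∈ X, ⟪-y, z - xb⟫ ≤ 0})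

/-- Lemma 2.2: bound on the residual of the best iterate of the OE method. -/
theorem oe_residual_bound
    {n : ℕ} (k : ℕ) (hk : 1 ≤ k)
    (X : Set (EuclideanSpace ℝ (Fin n)))
    (hXne : X.Nonempty) (hXcl : IsClosed X) (hXcv : Convex ℝ X)
    (F : EuclideanSpace ℝ (Fin n) → EuclideanSpace ℝ (Fin n))
    (L : ℝ) (hL : 0 < L)
    (hLip : ∀ x₁ ∈ X, ∀ x₂ ∈ X, ‖F x₁ - F x₂‖ ≤ L * ‖x₁ - x₂‖)
    -- the distance generating function: strongly convex, differentiable with gradient `w'`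
    -- which is Lipschitz continuous with constant `Lw`
    (w : EuclideanSpace ℝ (Fin n) → ℝ)
    (w' : EuclideanSpace ℝ (Fin n) → EuclideanSpace ℝ (Fin n))
    (hwsc : StrongConvexOn X 1 w)
    (hwgrad : ∀ x ∈ X, HasGradientAt w (w' x) x)
    (Lw : ℝ) (hLw : 0 ≤ Lw)
    (hwLip : ∀ x₁ ∈ X, ∀ x₂ ∈ X, ‖w' x₁ - w' x₂‖ ≤ Lw * ‖x₁ - x₂‖)
    (V : EuclideanSpace ℝ (Fin n) → EuclideanSpace ℝ (Fin n) → ℝ)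
    (hV : ∀ a b, V a b = w b - w a - ⟪w' a, b - a⟫)
    (hVlb : ∀ a ∈ X, ∀ b ∈ X, (1 : ℝ) / 2 * ‖a - b‖ ^ 2 ≤ V a b)
    -- algorithmic parameters
    (γ lam : ℕ → ℝ)
    (hγpos : ∀ t, 0 < γ t) (hlampos : ∀ t, 0 ≤ lam t)
    -- the OE iterates
    (x : ℕ → EuclideanSpace ℝ (Fin n))
    (hx0 : x 0 = x 1) (hx1 : x 1 ∈ X)
    (hstep : ∀ t, 1 ≤ t → t ≤ k →
      x (t + 1) ∈ X ∧
      IsMinOn (fun z => γ t * ⟪F (x t) + lam t • (F (x t) - F (x (t - 1))), z⟫ + V (x t) z)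
        X (x (t + 1)))
    -- `R` is the index minimizing `‖x_{t+1} - x_t‖² + ‖x_t - x_{t-1}‖²` over `t ∈ {1,…,k}`
    (R : ℕ) (hR1 : 1 ≤ R) (hRk : R ≤ k)
    (hRmin : ∀ t, 1 ≤ t → t ≤ k →
      ‖x (R + 1) - x R‖ ^ 2 + ‖x R - x (R - 1)‖ ^ 2
        ≤ ‖x (t + 1) - x t‖ ^ 2 + ‖x t - x (t - 1)‖ ^ 2)
    (δ : ℝ)
    (hδ : ∑ t ∈ Icc 1 k, ‖x (t + 1) - x t‖ ^ 2 ≤ δ) :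
    vIResidual X F (x (R + 1))
      ≤ 2 * (L + Lw / γ R + L * lam R) * (Real.sqrt (2 * δ) / Real.sqrt k) := by
  unfold vIResidual
  have hmemX : ∀ t, t ≤ k + 1 → x t ∈ X := by
    intro t ht
    match t with
    | 0 => rw [hx0]; exact hx1
    | 1 => exact hx1
    | (s+2) => exact (hstep (s+1) (by omega) (by omega)).1
  have hRX : x R ∈ X := hmemX R (by omega)
  have hR1X : x (R-1) ∈ X := hmemX _ (by omega)
  have hRpX : x (R+1) ∈ X := hmemX _ (by omega)
  have hmin := (hstep R hR1 hRk).2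
  have hmin' : IsMinOn (fun z => γ R * ⟪F (x R) + lam R • (F (x R) - F (x (R - 1))), z⟫
      + (w z - w (x R) - ⟪w' (x R), z - x R⟫)) X (x (R+1)) := by
    have heq : ∀ z, V (x R) z = w z - w (x R) - ⟪w' (x R), z - x R⟫ := fun z => hV _ _
    simpa only [heq] using hmin
  set g := F (x R) + lam R • (F (x R) - F (x (R - 1))) with hg
  set q := w' (x R) with hq
  set p := w' (x (R+1)) with hp
  clear_value g q p
  -- the gradient of the objective at x (R+1)
  set A : EuclideanSpace ℝ (Fin n) →L[ℝ] ℝ :=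
    γ R • (InnerProductSpace.toDual ℝ _ g : EuclideanSpace ℝ (Fin n) →L[ℝ] ℝ)
      + ((InnerProductSpace.toDual ℝ _ p : EuclideanSpace ℝ (Fin n) →L[ℝ] ℝ)
        - (InnerProductSpace.toDual ℝ _ q : EuclideanSpace ℝ (Fin n) →L[ℝ] ℝ)) with hA
  clear_value A
  have hfd : HasFDerivAt (fun z => γ R * ⟪g, z⟫ + (w z - w (x R) - ⟪q, z - x R⟫)) A (x (R+1)) := by
    have h1 : HasFDerivAt (fun z : EuclideanSpace ℝ (Fin n) => ⟪g, z⟫)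
        (InnerProductSpace.toDual ℝ _ g : EuclideanSpace ℝ (Fin n) →L[ℝ] ℝ) (x (R+1)) := by
      refine ((InnerProductSpace.toDual ℝ (EuclideanSpace ℝ (Fin n)) g).hasFDerivAt
        (x := x (R+1))).congr_of_eventuallyEq (Filter.Eventually.of_forall fun z => ?_)
      simp [InnerProductSpace.toDual_apply_apply]
    have h2 : HasFDerivAt (fun z : EuclideanSpace ℝ (Fin n) => ⟪q, z - x R⟫)
        (InnerProductSpace.toDual ℝ _ q : EuclideanSpace ℝ (Fin n) →L[ℝ] ℝ) (x (R+1)) := by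
      have h3 : HasFDerivAt (fun z : EuclideanSpace ℝ (Fin n) => ⟪q, z⟫)
          (InnerProductSpace.toDual ℝ _ q : EuclideanSpace ℝ (Fin n) →L[ℝ] ℝ) (x (R+1)) := by
        refine ((InnerProductSpace.toDual ℝ (EuclideanSpace ℝ (Fin n)) q).hasFDerivAt
          (x := x (R+1))).congr_of_eventuallyEq (Filter.Eventually.of_forall fun z => ?_)
        simp [InnerProductSpace.toDual_apply_apply]
      have he : (fun z : EuclideanSpace ℝ (Fin n) => ⟪q, z - x R⟫)
          = fun z : EuclideanSpace ℝ (Fin n) => ⟪q, z⟫ - ⟪q, x R⟫ := by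
        funext z; rw [inner_sub_right]
      rw [he]
      exact h3.sub_const _
    have hw' : HasFDerivAt w
        (InnerProductSpace.toDual ℝ _ p : EuclideanSpace ℝ (Fin n) →L[ℝ] ℝ) (x (R+1)) := by
      rw [hp]
      exact hasGradientAt_iff_hasFDerivAt.mp (hwgrad _ hRpX)
    rw [hA]
    exact (h1.const_mul (γ R)).add (((hw'.sub_const (w (x R))).sub h2))
  have hvi := vi_aux hXcv hRpX hmin' hfd
  set y := g + (γ R)⁻¹ • (p - q) with hy
  clear_value y
  have hyineq : ∀ z ∈ X, 0 ≤ ⟪y, z - x (R+1)⟫ := by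
    intro z hz
    have h0 := hvi z hz
    simp only [hA, ContinuousLinearMap.add_apply, ContinuousLinearMap.coe_smul',
      Pi.smul_apply, ContinuousLinearMap.coe_sub', Pi.sub_apply,
      InnerProductSpace.toDual_apply_apply, smul_eq_mul] at h0
    have key : ∀ (c u v : ℝ), 0 < c → 0 ≤ c*u + v → 0 ≤ u + c⁻¹*v := by
      intro c u v hc h
      have e : u + c⁻¹*v = c⁻¹*(c*u+v) := by field_simp
      rw [e]
      exact mul_nonneg (inv_nonneg.mpr hc.le) h
    have he : ⟪y, z - x (R+1)⟫
        = ⟪g, z - x (R+1)⟫ + (γ R)⁻¹ * (⟪p, z - x (R+1)⟫ - ⟪q, z - x (R+1)⟫) := by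
      rw [hy, inner_add_left, real_inner_smul_left, inner_sub_left]
    rw [he]
    exact key _ _ _ (hγpos R) h0
  have hymem : y ∈ {y : EuclideanSpace ℝ (Fin n) | ∀ z ∈ X, ⟪-y, z - x (R+1)⟫ ≤ 0} := by
    intro z hz
    rw [inner_neg_left]
    linarith [hyineq z hz]
  have hres : sInf ((fun y => ‖y - F (x (R+1))‖) ''
      {y : EuclideanSpace ℝ (Fin n) | ∀ z ∈ X, ⟪-y, z - x (R+1)⟫ ≤ 0})
      ≤ ‖y - F (x (R+1))‖ := by
    apply csInf_le
    · exact ⟨0, fun r hr => by obtain ⟨y', -, rfl⟩ := hr; exact norm_nonneg _⟩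
    · exact ⟨y, hymem, rfl⟩
  set a := ‖x (R+1) - x R‖ with ha
  set b := ‖x R - x (R-1)‖ with hb
  clear_value a b
  have ha0 : 0 ≤ a := ha ▸ norm_nonneg _
  have hb0 : 0 ≤ b := hb ▸ norm_nonneg _
  have hsplit : y - F (x (R+1)) = (F (x R) - F (x (R+1)))
      + lam R • (F (x R) - F (x (R-1))) + (γ R)⁻¹ • (p - q) := by
    rw [hy, hg]; module
  have hnorm : ‖y - F (x (R+1))‖ ≤ L * a + lam R * (L * b) + (γ R)⁻¹ * (Lw * a) := by
    rw [hsplit]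
    refine (norm_add₃_le).trans ?_
    have t1 : ‖F (x R) - F (x (R+1))‖ ≤ L * a := by
      rw [ha]
      have := hLip _ hRX _ hRpX
      rwa [norm_sub_rev (x R)] at this
    have t2 : ‖lam R • (F (x R) - F (x (R-1)))‖ ≤ lam R * (L * b) := by
      rw [hb, norm_smul, Real.norm_eq_abs, abs_of_nonneg (hlampos R)]
      exact mul_le_mul_of_nonneg_left (hLip _ hRX _ hR1X) (hlampos R)
    have t3 : ‖(γ R)⁻¹ • (p - q)‖ ≤ (γ R)⁻¹ * (Lw * a) := by
      rw [ha, norm_smul, Real.norm_eq_abs, abs_of_nonneg (inv_nonneg.mpr (hγpos R).le)]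
      have := hwLip _ hRpX _ hRX
      rw [← hp, ← hq] at this
      exact mul_le_mul_of_nonneg_left this (inv_nonneg.mpr (hγpos R).le)
    linarith
  have hCnorm : ‖y - F (x (R+1))‖ ≤ (L + Lw / γ R + L * lam R) * (a + b) := by
    rw [div_eq_mul_inv]
    linarith [hnorm, mul_nonneg hL.le hb0, mul_nonneg (mul_nonneg hL.le (hlampos R)) ha0,
      mul_nonneg (mul_nonneg hLw (inv_nonneg.mpr (hγpos R).le)) hb0]
  -- sum estimates
  have hδ0 : 0 ≤ δ :=
    le_trans (Finset.sum_nonneg fun i _ => by positivity) hδ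
  have hk0 : (0:ℝ) < k := by exact_mod_cast Nat.pos_of_ne_zero (by omega)
  have hsum2 : ∑ t ∈ Icc 1 k, ‖x t - x (t-1)‖^2 ≤ ∑ t ∈ Icc 1 k, ‖x (t+1) - x t‖^2 := by
    have e1 : ∑ t ∈ Icc 1 k, ‖x t - x (t-1)‖^2 = ∑ i ∈ range k, ‖x (i+1) - x i‖^2 := by
      rw [← Finset.Ico_add_one_right_eq_Icc, Finset.sum_Ico_eq_sum_range]
      refine Finset.sum_congr (by congr 1) fun i _ => ?_
      have e : 1 + i - 1 = i := by omega
      have e' : 1 + i = i + 1 := by omega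
      rw [e, e']
    rw [e1, Finset.range_eq_Ico, Finset.sum_eq_sum_Ico_succ_bot (by omega : 0 < k)]
    have e0 : ‖x (0+1) - x 0‖^2 = (0:ℝ) := by simp [hx0]
    rw [e0, zero_add]
    refine Finset.sum_le_sum_of_subset_of_nonneg ?_ (fun i _ _ => by positivity)
    intro i hi
    simp only [Finset.mem_Ico, Finset.mem_Icc] at *
    omega
  have hkm : (k:ℝ) * (a^2 + b^2) ≤ 2*δ := by
    have h1 := Finset.card_nsmul_le_sum (Icc 1 k)
      (fun t => ‖x (t+1) - x t‖^2 + ‖x t - x (t-1)‖^2) (a^2 + b^2)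
      (fun t ht => hRmin t (mem_Icc.mp ht).1 (mem_Icc.mp ht).2)
    rw [Nat.card_Icc, Finset.sum_add_distrib, nsmul_eq_mul] at h1
    have hc : ((k + 1 - 1 : ℕ) : ℝ) = (k:ℝ) := by norm_num
    rw [hc] at h1
    linarith
  set T := Real.sqrt (2*δ) / Real.sqrt k with hT
  clear_value T
  have hT0 : 0 ≤ T := by rw [hT]; positivity
  have hab2 : (a+b)^2 ≤ (2*T)^2 := by
    have h2 : (2*T)^2 = 4 * (2*δ/(k:ℝ)) := by
      rw [hT, mul_pow, div_pow, Real.sq_sqrt (by linarith), Real.sq_sqrt hk0.le]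
      ring
    have h3 : (a+b)^2 ≤ 2*(a^2+b^2) := by clear * - ; nlinarith [sq_nonneg (a-b)]
    have hm : a^2+b^2 ≤ 2*δ/(k:ℝ) := by
      rw [le_div_iff₀ hk0, mul_comm]
      exact hkm
    rw [h2]
    linarith [sq_nonneg a, sq_nonneg b]
  have hab : a + b ≤ 2*T :=
    calc a + b = Real.sqrt ((a+b)^2) := (Real.sqrt_sq (by positivity)).symm
      _ ≤ Real.sqrt ((2*T)^2) := Real.sqrt_le_sqrt hab2
      _ = 2*T := Real.sqrt_sq (by positivity)
  have hC0 : 0 ≤ L + Lw / γ R + L * lam R := by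
    have h1 : 0 ≤ Lw / γ R := div_nonneg hLw (hγpos R).le
    have h2 : 0 ≤ L * lam R := mul_nonneg hL.le (hlampos R)
    linarith
  calc sInf ((fun y => ‖y - F (x (R+1))‖) ''
      {y : EuclideanSpace ℝ (Fin n) | ∀ z ∈ X, ⟪-y, z - x (R+1)⟫ ≤ 0})
      ≤ ‖y - F (x (R+1))‖ := hres
    _ ≤ (L + Lw / γ R + L * lam R) * (a + b) := hCnorm
    _ ≤ (L + Lw / γ R + L * lam R) * (2*T) := mul_le_mul_of_nonneg_left hab hC0
    _ = 2 * (L + Lw / γ R + L * lam R) * T := by ring
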